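/- Let (W,S) be a Coxeter system with Hecke algebra H, J ⊂ S with W_J finite with longest element w_J, z ∈ W with ℓ(w_J z) = ℓ(w_J) + ℓ(z), and set v = w_J z. Then the A-submodule M := ⟨T_x C_v : x ∈ X_J⟩ of H is a left ideal of H. -/

import Mathlib

/-- The generic Iwahori-Hecke algebra of a Coxeter system `(W,S)` over `A = ℤ[v,v⁻¹]`
with parameters `L(s)`, standard basis `{T_w}`, bar involution, and
Kazhdan–Lusztig basis `{C_w}` (characterized by bar-invariance and
`C_w = T_w + Σ_{y} P_{y,w} T_y` with `P_{y,w} ∈ v⁻¹ℤ[v⁻¹]` for `y ≠ w`). -/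
structure KLAlg {B W : Type*} [Group W] {M : CoxeterMatrix B} (cs : CoxeterSystem M W)
    (L : W → ℤ) where
  carrier : Type*
  [ringCarrier : Ring carrier]
  [algCarrier : Algebra (LaurentPolynomial ℤ) carrier]
  T : Module.Basis W (LaurentPolynomial ℤ) carrier
  T_one : T 1 = 1
  T_mul_of_lt : ∀ (s : B) (w : W), cs.length (cs.simple s * w) = cs.length w + 1 →
    T (cs.simple s) * T w = T (cs.simple s * w)
  T_mul_of_gt : ∀ (s : B) (w : W), cs.length (cs.simple s * w) + 1 = cs.length w →
    T (cs.simple s) * T w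
      = T (cs.simple s * w)
        + ((LaurentPolynomial.T (L (cs.simple s)) - LaurentPolynomial.T (-(L (cs.simple s)))
            : LaurentPolynomial ℤ)) • T w
  /-- The bar involution `v ↦ v⁻¹`, `T_w ↦ T_{w⁻¹}⁻¹`. -/
  bar : carrier → carrier
  bar_add : ∀ a b : carrier, bar (a + b) = bar a + bar b
  bar_mul : ∀ a b : carrier, bar (a * b) = bar a * bar b
  bar_smul : ∀ (c : LaurentPolynomial ℤ) (h : carrier),
    bar (c • h) = (LaurentPolynomial.invert c) • bar h
  bar_T : ∀ w : W, bar (T w) * T w⁻¹ = 1 ∧ T w⁻¹ * bar (T w) = 1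
  /-- The Kazhdan–Lusztig basis. -/
  C : Module.Basis W (LaurentPolynomial ℤ) carrier
  C_bar : ∀ w : W, bar (C w) = C w
  C_diag : ∀ w : W, T.repr (C w) w = 1
  C_off : ∀ w y : W, y ≠ w → (T.repr (C w) y).degree < 0

attribute [instance] KLAlg.ringCarrier KLAlg.algCarrier

/-- The Bruhat order on a Coxeter group: `x ≤ y` iff `y` is obtained from `x` by
successively multiplying by reflections, increasing the length at each step. -/
def CoxeterSystem.bruhatLE {B W : Type*} [Group W] {M : CoxeterMatrix B}
    (cs : CoxeterSystem M W) : W → W → Prop :=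
  Relation.ReflTransGen fun a b =>
    (∃ t : W, cs.IsReflection t ∧ b = a * t) ∧ cs.length a < cs.length b

namespace KLAlg

variable {B W : Type*} [Group W] {M : CoxeterMatrix B} {cs : CoxeterSystem M W} {L : W → ℤ}

/-- The Kazhdan–Lusztig left preorder `≤_L`, generated by: `y ≤_L w` if `C_y` appears
with nonzero coefficient in `T_s C_w` for some `s ∈ S`. -/
def leL (H : KLAlg cs L) : W → W → Prop :=
  Relation.ReflTransGen fun a b => ∃ s : B, H.C.repr (H.T (cs.simple s) * H.C b) a ≠ 0

/-- The Kazhdan–Lusztig right preorder `≤_R`. -/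
def leR (H : KLAlg cs L) : W → W → Prop :=
  Relation.ReflTransGen fun a b => ∃ s : B, H.C.repr (H.C b * H.T (cs.simple s)) a ≠ 0

/-- The Kazhdan–Lusztig two-sided preorder `≤_LR`. -/
def leLR (H : KLAlg cs L) : W → W → Prop :=
  Relation.ReflTransGen fun a b =>
    (∃ s : B, H.C.repr (H.T (cs.simple s) * H.C b) a ≠ 0) ∨
    (∃ s : B, H.C.repr (H.C b * H.T (cs.simple s)) a ≠ 0)

/-- `∼_L` : being in the same left cell. -/
def eqL (H : KLAlg cs L) (a b : W) : Prop := H.leL a b ∧ H.leL b a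

/-- `∼_R` : being in the same right cell. -/
def eqR (H : KLAlg cs L) (a b : W) : Prop := H.leR a b ∧ H.leR b a

/-- `∼_LR` : being in the same two-sided cell. -/
def eqLR (H : KLAlg cs L) (a b : W) : Prop := H.leLR a b ∧ H.leLR b a

end KLAlg

/-- Abstract data of the set `T` of special points of the geometric realization of an
irreducible affine Weyl group: each special point `λ` has a set `S_λ ⊆ S` of simple
reflections generating its (finite, maximal parabolic) stabilizer `W_λ`, whose longest
element `w_λ` has maximal weight among longest elements of finite parabolic subgroups;
all the `W_λ` are isomorphic to the finite Weyl group `W₀`, and `T` carries the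
equivalence relation "being in the same `Ω`-orbit". -/
structure SpecialPoints {B W : Type*} [Group W] {M : CoxeterMatrix B}
    (cs : CoxeterSystem M W) (L : W → ℤ) where
  pt : Type*
  Sp : pt → Set B
  stab_finite : ∀ lam : pt, (Subgroup.closure (cs.simple '' Sp lam) : Set W).Finite
  wl : pt → W
  wl_mem : ∀ lam : pt, wl lam ∈ Subgroup.closure (cs.simple '' Sp lam)
  wl_longest : ∀ lam : pt, ∀ u ∈ Subgroup.closure (cs.simple '' Sp lam),
    cs.length u ≤ cs.length (wl lam)
  wl_max_weight : ∀ (lam : pt) (J : Set B), (Subgroup.closure (cs.simple '' J) : Set W).Finite →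
    ∀ u ∈ Subgroup.closure (cs.simple '' J), L u ≤ L (wl lam)
  /-- the cardinality of the finite Weyl group `W₀` -/
  W0card : ℕ
  stab_card : ∀ lam : pt, Nat.card (Subgroup.closure (cs.simple '' Sp lam)) = W0card
  /-- `Ω`-orbit equivalence on special points -/
  orb : pt → pt → Prop
  orb_equivalence : Equivalence orb

namespace SpecialPoints

variable {B W : Type*} [Group W] {M : CoxeterMatrix B} {cs : CoxeterSystem M W} {L : W → ℤ}

/-- The lowest two-sided cell
`c₀ = {w ∈ W : w = z'.w_λ.z reduced, z,z' ∈ W, λ ∈ T}`. -/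
def c0 (SP : SpecialPoints cs L) : Set W :=
  {w : W | ∃ (lam : SP.pt) (z' z : W), w = z' * SP.wl lam * z ∧
    cs.length (z' * SP.wl lam * z) = cs.length z' + cs.length (SP.wl lam) + cs.length z}

/-- `X_λ`, the set of minimal length left coset representatives of `W_λ`. -/
def Xl (SP : SpecialPoints cs L) (lam : SP.pt) : Set W :=
  {w : W | ∀ s ∈ SP.Sp lam, cs.length w < cs.length (w * cs.simple s)}

/-- `M_λ = {z : w_λ z reduced and s w_λ z ∉ c₀ for all s ∈ S_λ}`. -/
def Ml (SP : SpecialPoints cs L) (lam : SP.pt) : Set W :=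
  {z : W | cs.length (SP.wl lam * z) = cs.length (SP.wl lam) + cs.length z ∧
    ∀ s ∈ SP.Sp lam, cs.simple s * SP.wl lam * z ∉ SP.c0}

/-- `N_{λ,z} = {x w_λ z : x ∈ X_λ}`. -/
def Nl (SP : SpecialPoints cs L) (lam : SP.pt) (z : W) : Set W :=
  (fun x => x * SP.wl lam * z) '' SP.Xl lam

end SpecialPoints

namespace KLAux
open LaurentPolynomial

section WB
-- WithBot ℤ helpers
lemma wb_add_lt_of_lt_of_lt {a b : WithBot ℤ} {m n : ℤ} (ha : a < (m : ℤ)) (hb : b < (n : ℤ)) :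
    a + b < ((m + n : ℤ) : WithBot ℤ) := by
  cases a with
  | bot => rw [WithBot.bot_add]; exact WithBot.bot_lt_coe _
  | coe a =>
    cases b with
    | bot => rw [WithBot.add_bot]; exact WithBot.bot_lt_coe _
    | coe b => exact_mod_cast add_lt_add (WithBot.coe_lt_coe.mp ha) (WithBot.coe_lt_coe.mp hb)

lemma wb_add_lt_of_lt_of_le {a b : WithBot ℤ} {m n : ℤ} (ha : a < (m : ℤ)) (hb : b ≤ (n : ℤ)) :
    a + b < ((m + n : ℤ) : WithBot ℤ) := by
  cases a with
  | bot => rw [WithBot.bot_add]; exact WithBot.bot_lt_coe _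
  | coe a =>
    cases b with
    | bot => rw [WithBot.add_bot]; exact WithBot.bot_lt_coe _
    | coe b =>
      exact_mod_cast add_lt_add_of_lt_of_le (WithBot.coe_lt_coe.mp ha) (WithBot.coe_le_coe.mp hb)

end WB

section Laurent

lemma ldeg_mul_le (f g : LaurentPolynomial ℤ) : (f*g).degree ≤ f.degree + g.degree := by
  rw [LaurentPolynomial.degree, LaurentPolynomial.degree, LaurentPolynomial.degree,
    Finset.max_eq_sup_withBot, Finset.max_eq_sup_withBot, Finset.max_eq_sup_withBot]
  exact AddMonoidAlgebra.supDegree_mul_le (fun a b => by push_cast; ring)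

lemma ldeg_add_le (f g : LaurentPolynomial ℤ) : (f+g).degree ≤ max f.degree g.degree := by
  rw [LaurentPolynomial.degree, LaurentPolynomial.degree, LaurentPolynomial.degree,
    Finset.max_eq_sup_withBot, Finset.max_eq_sup_withBot, Finset.max_eq_sup_withBot]
  exact AddMonoidAlgebra.supDegree_add_le

lemma ldeg_sub_le (f g : LaurentPolynomial ℤ) : (f-g).degree ≤ max f.degree g.degree := by
  rw [LaurentPolynomial.degree, LaurentPolynomial.degree, LaurentPolynomial.degree,
    Finset.max_eq_sup_withBot, Finset.max_eq_sup_withBot, Finset.max_eq_sup_withBot]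
  exact AddMonoidAlgebra.supDegree_sub_le

lemma ldeg_add_lt {f g : LaurentPolynomial ℤ} {d : WithBot ℤ} (hf : f.degree < d)
    (hg : g.degree < d) : (f+g).degree < d :=
  lt_of_le_of_lt (ldeg_add_le f g) (max_lt hf hg)

lemma ldeg_sub_lt {f g : LaurentPolynomial ℤ} {d : WithBot ℤ} (hf : f.degree < d)
    (hg : g.degree < d) : (f-g).degree < d :=
  lt_of_le_of_lt (ldeg_sub_le f g) (max_lt hf hg)

lemma ldeg_sum_lt {X : Type*} (s : Finset X) (f : X → LaurentPolynomial ℤ) {d : ℤ}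
    (h : ∀ x ∈ s, (f x).degree < (d : WithBot ℤ)) :
    (∑ x ∈ s, f x).degree < (d : WithBot ℤ) := by
  classical
  induction s using Finset.cons_induction with
  | empty => simp [WithBot.bot_lt_coe]
  | cons a s ha ih =>
    rw [Finset.sum_cons]
    exact ldeg_add_lt (h a (Finset.mem_cons_self a s))
      (ih (fun x hx => h x (Finset.mem_cons.mpr (Or.inr hx))))

lemma ldeg_T_mul (n : ℤ) (f : LaurentPolynomial ℤ) :
    (LaurentPolynomial.T n * f).degree = n + f.degree := by
  apply le_antisymm
  · exact (ldeg_mul_le _ f).trans (by rw [LaurentPolynomial.degree_T])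
  · have h1 : f.degree ≤ (-n : ℤ) + (LaurentPolynomial.T n * f).degree := by
      have : f = LaurentPolynomial.T (-n) * (LaurentPolynomial.T n * f) := by
        rw [← mul_assoc, ← LaurentPolynomial.T_add]
        simp
      nth_rewrite 1 [this]
      exact (ldeg_mul_le _ _).trans (by rw [LaurentPolynomial.degree_T])
    have h2 : ((n : ℤ) : WithBot ℤ) + f.degree
        ≤ ((n : ℤ) : WithBot ℤ) + (((-n : ℤ) : WithBot ℤ) + (LaurentPolynomial.T n * f).degree) := by
      gcongr
    rw [← add_assoc, ← WithBot.coe_add] at h2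
    norm_num at h2
    rwa [mul_comm] at h2

lemma symm_neg_zero {p : LaurentPolynomial ℤ} (hs : LaurentPolynomial.invert p = p)
    (hd : p.degree < 0) : p = 0 := by
  by_contra hp
  obtain ⟨d, hdmem⟩ := Finsupp.support_nonempty_iff.mpr (mt AddMonoidAlgebra.coeff_eq_zero.mp hp)
  obtain ⟨m, hm⟩ := Finset.max_of_nonempty (⟨d, hdmem⟩ : p.coeff.support.Nonempty)
  have hdeg : p.degree = (m : WithBot ℤ) := hm
  have hm0 : (m : WithBot ℤ) < 0 := hdeg ▸ hd
  have hm0' : m < (0:ℤ) := by exact_mod_cast hm0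
  have hmmem : m ∈ p.coeff.support := Finset.mem_of_max hm
  have hneg : -m ∈ p.coeff.support := by
    rw [Finsupp.mem_support_iff] at hmmem ⊢
    intro h
    apply hmmem
    have h2 := congrArg (fun q => q.coeff m) hs
    simp only [LaurentPolynomial.invert_apply] at h2
    rw [← h2, h]
  have := Finset.le_max hneg
  rw [← LaurentPolynomial.degree] at this
  have h3 : ((-m : ℤ) : WithBot ℤ) < 0 := lt_of_le_of_lt this hd
  have h4 : (-m : ℤ) < 0 := by exact_mod_cast h3
  omega

end Laurent

end KLAux
namespace KLAux
open LaurentPolynomial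

section Hecke
variable {B W : Type*} [Group W] {M : CoxeterMatrix B} {cs : CoxeterSystem M W} {L : W → ℤ}

/-- the parameter `v^{L(s)} - v^{-L(s)}` -/
noncomputable def cc (cs : CoxeterSystem M W) (L : W → ℤ) (s : B) : LaurentPolynomial ℤ :=
  LaurentPolynomial.T (L (cs.simple s)) - LaurentPolynomial.T (-(L (cs.simple s)))

lemma simple_ne_one (s : B) : cs.simple s ≠ 1 := by
  intro h
  have h1 := cs.length_simple s
  rw [h, cs.length_one] at h1
  omega

variable (H : KLAlg cs L)

lemma bar_zero : H.bar 0 = 0 := by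
  have h := H.bar_add 0 0
  rw [add_zero] at h
  nth_rewrite 1 [← add_zero (H.bar 0)] at h
  exact (add_left_cancel h).symm

lemma bar_neg (x : H.carrier) : H.bar (-x) = -H.bar x := by
  have h := H.bar_add x (-x)
  rw [add_neg_cancel, bar_zero] at h
  exact eq_neg_of_add_eq_zero_right h.symm

lemma bar_sub (x y : H.carrier) : H.bar (x - y) = H.bar x - H.bar y := by
  rw [sub_eq_add_neg, H.bar_add, bar_neg, ← sub_eq_add_neg]

lemma Ts_sq (s : B) : H.T (cs.simple s) * H.T (cs.simple s)
    = 1 + cc cs L s • H.T (cs.simple s) := by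
  have h := H.T_mul_of_gt s (cs.simple s)
    (by rw [cs.simple_mul_simple_self, cs.length_one, cs.length_simple])
  rw [cs.simple_mul_simple_self] at h
  rw [h, H.T_one, cc]

lemma bar_Ts (s : B) : H.bar (H.T (cs.simple s)) = H.T (cs.simple s) - cc cs L s • 1 := by
  have hsq := Ts_sq H s
  have hU : (H.T (cs.simple s) - cc cs L s • 1) * H.T (cs.simple s) = 1 := by
    rw [sub_mul, smul_mul_assoc, one_mul, hsq]
    abel
  have h2 : H.T (cs.simple s) * H.bar (H.T (cs.simple s)) = 1 := by
    have := (H.bar_T (cs.simple s)).2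
    rwa [cs.inv_simple] at this
  calc H.bar (H.T (cs.simple s))
      = 1 * H.bar (H.T (cs.simple s)) := (one_mul _).symm
    _ = ((H.T (cs.simple s) - cc cs L s • 1) * H.T (cs.simple s)) * H.bar (H.T (cs.simple s)) := by
        rw [hU]
    _ = (H.T (cs.simple s) - cc cs L s • 1) * (H.T (cs.simple s) * H.bar (H.T (cs.simple s))) :=
        mul_assoc _ _ _
    _ = H.T (cs.simple s) - cc cs L s • 1 := by rw [h2, mul_one]

lemma reprTs (s : B) (y : W) (h : H.carrier) :
    H.T.repr (H.T (cs.simple s) * h) y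
      = H.T.repr h (cs.simple s * y)
        + (if cs.length (cs.simple s * y) < cs.length y then cc cs L s else 0)
          * H.T.repr h y := by
  classical
  set c : LaurentPolynomial ℤ :=
    if cs.length (cs.simple s * y) < cs.length y then cc cs L s else 0 with hc
  set F1 : H.carrier →ₗ[LaurentPolynomial ℤ] LaurentPolynomial ℤ :=
    (Finsupp.lapply y) ∘ₗ (H.T.repr.toLinearMap) ∘ₗ
      (LinearMap.mulLeft (LaurentPolynomial ℤ) (H.T (cs.simple s))) with hF1
  set F2 : H.carrier →ₗ[LaurentPolynomial ℤ] LaurentPolynomial ℤ :=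
    ((Finsupp.lapply (cs.simple s * y)) ∘ₗ H.T.repr.toLinearMap)
      + c • ((Finsupp.lapply y) ∘ₗ H.T.repr.toLinearMap) with hF2
  have key : F1 = F2 := by
    apply H.T.ext
    intro x
    rw [hF1, hF2]
    simp only [LinearMap.coe_comp, Function.comp_apply, LinearMap.mulLeft_apply,
      LinearEquiv.coe_toLinearMap, LinearMap.add_apply, LinearMap.smul_apply,
      Finsupp.lapply_apply, smul_eq_mul]
    rcases cs.length_simple_mul x s with hup | hdown
    · rw [H.T_mul_of_lt s x hup]
      simp only [Module.Basis.repr_self, Finsupp.single_apply]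
      by_cases hxy : x = y
      · subst hxy
        have hne1 : ¬ (cs.simple s * x = x) := by
          intro hh
          have := congrArg cs.length hh
          omega
        have hcond : ¬ cs.length (cs.simple s * x) < cs.length x := by omega
        rw [hc]
        simp [hne1, hcond, simple_ne_one (cs := cs) s]
      · have h1 : (cs.simple s * x = y) ↔ (x = cs.simple s * y) := by
          constructor
          · intro hh; rw [← hh, cs.simple_mul_simple_cancel_left]
          · intro hh; rw [hh, cs.simple_mul_simple_cancel_left]
        simp [hxy, h1]
    · rw [H.T_mul_of_gt s x hdown]
      simp only [map_add, map_smul, Module.Basis.repr_self, Finsupp.add_apply, Finsupp.smul_apply,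
        Finsupp.single_apply, smul_eq_mul]
      by_cases hxy : x = y
      · subst hxy
        have hne1 : ¬ (cs.simple s * x = x) := by
          intro hh
          have := congrArg cs.length hh
          omega
        have hcond : cs.length (cs.simple s * x) < cs.length x := by omega
        have h1 : ¬ (x = cs.simple s * x) := fun hh => hne1 hh.symm
        rw [hc]
        simp [hne1, hcond, h1, cc, simple_ne_one (cs := cs) s]
      · have h1 : (cs.simple s * x = y) ↔ (x = cs.simple s * y) := by
          constructor
          · intro hh; rw [← hh, cs.simple_mul_simple_cancel_left]
          · intro hh; rw [hh, cs.simple_mul_simple_cancel_left]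
        simp [hxy, h1]
  have hkey := LinearMap.congr_fun key h
  rw [hF1, hF2] at hkey
  simpa only [LinearMap.coe_comp, Function.comp_apply, LinearMap.mulLeft_apply,
    LinearEquiv.coe_toLinearMap, LinearMap.add_apply, LinearMap.smul_apply,
    Finsupp.lapply_apply, smul_eq_mul] using hkey

end Hecke
end KLAux
namespace KLAux
open LaurentPolynomial

section Hecke2
variable {B W : Type*} [Group W] {M : CoxeterMatrix B} {cs : CoxeterSystem M W} {L : W → ℤ}
variable (H : KLAlg cs L)

/-- bar as an additive monoid hom -/
noncomputable def barH : H.carrier →+ H.carrier := AddMonoidHom.mk' H.bar H.bar_add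

@[simp] lemma barH_apply (x : H.carrier) : barH H x = H.bar x := rfl

lemma bar_expand (h : H.carrier) :
    H.bar h = (H.T.repr h).sum fun x cx => LaurentPolynomial.invert cx • H.bar (H.T x) := by
  conv_lhs => rw [← H.T.linearCombination_repr h]
  rw [Finsupp.linearCombination_apply, Finsupp.sum, Finsupp.sum, ← barH_apply, map_sum]
  apply Finset.sum_congr rfl
  intro x _
  rw [barH_apply, H.bar_smul]

lemma bar_T_one : H.bar (H.T 1) = H.T 1 := by
  have h := (H.bar_T 1).1
  rw [inv_one, H.T_one, mul_one] at h
  rw [H.T_one, h]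

lemma bar_T_tri : ∀ (n : ℕ) (w : W), cs.length w ≤ n →
    (H.T.repr (H.bar (H.T w)) w = 1 ∧
      ∀ y : W, H.T.repr (H.bar (H.T w)) y ≠ 0 → cs.length y < cs.length w ∨ y = w) := by
  classical
  intro n
  induction n with
  | zero =>
    intro w hw
    have hw1 : w = 1 := cs.length_eq_zero_iff.mp (by omega)
    subst hw1
    rw [bar_T_one]
    refine ⟨by simp [Module.Basis.repr_self], ?_⟩
    intro y hy
    rw [Module.Basis.repr_self, Finsupp.single_apply] at hy
    right
    by_contra hne
    apply hy
    rw [if_neg (fun hh => hne hh.symm)]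
  | succ n IH =>
    intro w hw
    by_cases hw1 : w = 1
    · subst hw1
      rw [bar_T_one]
      refine ⟨by simp [Module.Basis.repr_self], ?_⟩
      intro y hy
      rw [Module.Basis.repr_self, Finsupp.single_apply] at hy
      right
      by_contra hne
      apply hy
      rw [if_neg (fun hh => hne hh.symm)]
    · obtain ⟨i, hdesc⟩ := cs.exists_leftDescent_of_ne_one hw1
      have hdesc' : cs.length (cs.simple i * w) < cs.length w := hdesc
      set u := cs.simple i * w with hu
      have hlu : cs.length u + 1 = cs.length w := by
        rcases cs.length_simple_mul w i with h1 | h2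
        · rw [← hu] at h1; omega
        · rw [← hu] at h2; exact h2
      have hw_eq : cs.simple i * u = w := by rw [hu, cs.simple_mul_simple_cancel_left]
      have hTw : H.T w = H.T (cs.simple i) * H.T u := by
        rw [H.T_mul_of_lt i u (by rw [hw_eq]; omega), hw_eq]
      have hbar : H.bar (H.T w) = H.T (cs.simple i) * H.bar (H.T u)
          - cc cs L i • H.bar (H.T u) := by
        rw [hTw, H.bar_mul, bar_Ts, sub_mul, smul_mul_assoc, one_mul]
      have IHu := IH u (by omega)
      have hcoeff : ∀ y : W, H.T.repr (H.bar (H.T w)) y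
          = H.T.repr (H.bar (H.T u)) (cs.simple i * y)
            + (if cs.length (cs.simple i * y) < cs.length y then cc cs L i else 0)
              * H.T.repr (H.bar (H.T u)) y
            - cc cs L i * H.T.repr (H.bar (H.T u)) y := by
        intro y
        rw [hbar, map_sub, Finsupp.sub_apply, reprTs, map_smul, Finsupp.smul_apply, smul_eq_mul]
      constructor
      · rw [hcoeff w]
        have h1 : H.T.repr (H.bar (H.T u)) (cs.simple i * w) = 1 := by
          rw [← hu]; exact IHu.1
        have h2 : H.T.repr (H.bar (H.T u)) w = 0 := by
          by_contra hh
          rcases IHu.2 w hh with hlt | heq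
          · omega
          · have := congrArg cs.length heq; omega
        rw [h1, h2]; ring
      · intro y hy
        by_contra hcon
        push_neg at hcon
        obtain ⟨hylen, hyne⟩ := hcon
        apply hy
        rw [hcoeff y]
        have h2 : H.T.repr (H.bar (H.T u)) y = 0 := by
          by_contra hh
          rcases IHu.2 y hh with hlt | heq
          · omega
          · have := congrArg cs.length heq; omega
        have h1 : H.T.repr (H.bar (H.T u)) (cs.simple i * y) = 0 := by
          by_contra hh
          rcases IHu.2 _ hh with hlt | heq
          · have := cs.length_simple_mul y i
            omega
          · have hyy : y = cs.simple i * u := by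
              rw [← heq, cs.simple_mul_simple_cancel_left]
            rw [hw_eq] at hyy
            exact hyne hyy
        rw [h1, h2]; ring

lemma repr_bar_top (h : H.carrier) (y : W)
    (hmax : ∀ x : W, H.T.repr h x ≠ 0 → cs.length x ≤ cs.length y) :
    H.T.repr (H.bar h) y = LaurentPolynomial.invert (H.T.repr h y) := by
  classical
  rw [bar_expand, map_finsuppSum, Finsupp.sum_apply]
  rw [Finsupp.sum_eq_single y ?h0 ?h1]
  · rw [map_smul, Finsupp.smul_apply, smul_eq_mul,
      (bar_T_tri H (cs.length y) y le_rfl).1, mul_one]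
  · intro x hx hxy
    rw [map_smul, Finsupp.smul_apply, smul_eq_mul]
    have hz : H.T.repr (H.bar (H.T x)) y = 0 := by
      by_contra hh
      rcases (bar_T_tri H (cs.length x) x le_rfl).2 y hh with hlt | heq
      · exact absurd (hmax x hx) (by omega)
      · exact hxy heq.symm
    rw [hz, mul_zero]
  · intro _
    simp

lemma repr_C_bar (h : H.carrier) (y : W) :
    H.C.repr (H.bar h) y = LaurentPolynomial.invert (H.C.repr h y) := by
  classical
  have hexp : H.bar h = (H.C.repr h).sum fun x cx => LaurentPolynomial.invert cx • H.C x := by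
    conv_lhs => rw [← H.C.linearCombination_repr h]
    rw [Finsupp.linearCombination_apply, Finsupp.sum, Finsupp.sum, ← barH_apply, map_sum]
    apply Finset.sum_congr rfl
    intro x _
    rw [barH_apply, H.bar_smul, H.C_bar]
  rw [hexp, map_finsuppSum, Finsupp.sum_apply]
  rw [Finsupp.sum_eq_single y ?h0 ?h1]
  · rw [map_smul, Finsupp.smul_apply, smul_eq_mul, Module.Basis.repr_self, Finsupp.single_apply,
      if_pos rfl, mul_one]
  · intro x hx hxy
    rw [map_smul, Finsupp.smul_apply, smul_eq_mul, Module.Basis.repr_self, Finsupp.single_apply,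
      if_neg hxy, mul_zero]
  · intro _
    simp

lemma C_tri (w y : W) (hy : H.T.repr (H.C w) y ≠ 0) :
    cs.length y < cs.length w ∨ y = w := by
  classical
  by_contra hcon
  push_neg at hcon
  obtain ⟨hylen, hyne⟩ := hcon
  have hysupp : y ∈ (H.T.repr (H.C w)).support := Finsupp.mem_support_iff.mpr hy
  have hne : (((H.T.repr (H.C w)).support).image cs.length).Nonempty :=
    ⟨cs.length y, Finset.mem_image_of_mem _ hysupp⟩
  set n := (((H.T.repr (H.C w)).support).image cs.length).max' hne with hn
  have hclaim : n ≤ cs.length w := by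
    by_contra hgt
    push_neg at hgt
    obtain ⟨m, hm, hm2⟩ := Finset.mem_image.mp
      ((((H.T.repr (H.C w)).support).image cs.length).max'_mem hne)
    have hmw : m ≠ w := by
      intro hh; rw [hh] at hm2; omega
    have hmax : ∀ x : W, H.T.repr (H.C w) x ≠ 0 → cs.length x ≤ cs.length m := by
      intro x hx
      rw [hm2]
      exact Finset.le_max' _ _ (Finset.mem_image_of_mem _ (Finsupp.mem_support_iff.mpr hx))
    have hsym : LaurentPolynomial.invert (H.T.repr (H.C w) m) = H.T.repr (H.C w) m := by
      have h3 := repr_bar_top H (H.C w) m hmax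
      rw [H.C_bar] at h3
      exact h3.symm
    exact (Finsupp.mem_support_iff.mp hm) (symm_neg_zero hsym (H.C_off w m hmw))
  have hyn : cs.length y = n :=
    le_antisymm (Finset.le_max' _ _ (Finset.mem_image_of_mem _ hysupp)) (by omega)
  have hmax : ∀ x : W, H.T.repr (H.C w) x ≠ 0 → cs.length x ≤ cs.length y := by
    intro x hx
    rw [hyn]
    exact Finset.le_max' _ _ (Finset.mem_image_of_mem _ (Finsupp.mem_support_iff.mpr hx))
  have hsym : LaurentPolynomial.invert (H.T.repr (H.C w) y) = H.T.repr (H.C w) y := by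
    have h3 := repr_bar_top H (H.C w) y hmax
    rw [H.C_bar] at h3
    exact h3.symm
  exact hy (symm_neg_zero hsym (H.C_off w y hyne))

end Hecke2
end KLAux
namespace KLAux
open LaurentPolynomial

section Laurent2

lemma wb_add_le {a b : WithBot ℤ} {m n : ℤ} (ha : a ≤ (m : ℤ)) (hb : b ≤ (n : ℤ)) :
    a + b ≤ ((m + n : ℤ) : WithBot ℤ) := by
  cases a with
  | bot => rw [WithBot.bot_add]; exact bot_le
  | coe a =>
    cases b with
    | bot => rw [WithBot.add_bot]; exact bot_le
    | coe b =>
      exact_mod_cast add_le_add (WithBot.coe_le_coe.mp ha) (WithBot.coe_le_coe.mp hb)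

lemma wb_add_lt_of_le_of_lt {a b : WithBot ℤ} {m n : ℤ} (ha : a ≤ (m : ℤ)) (hb : b < (n : ℤ)) :
    a + b < ((m + n : ℤ) : WithBot ℤ) := by
  cases a with
  | bot => rw [WithBot.bot_add]; exact WithBot.bot_lt_coe _
  | coe a =>
    cases b with
    | bot => rw [WithBot.add_bot]; exact WithBot.bot_lt_coe _
    | coe b =>
      exact_mod_cast add_lt_add_of_le_of_lt (WithBot.coe_le_coe.mp ha) (WithBot.coe_lt_coe.mp hb)

lemma ldeg_one : (1 : LaurentPolynomial ℤ).degree = 0 := by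
  have h : ((1 : LaurentPolynomial ℤ)) = LaurentPolynomial.C 1 := (map_one _).symm
  rw [h]
  exact LaurentPolynomial.degree_C one_ne_zero

end Laurent2

section KLKey

variable {B W : Type*} [Group W] {M : CoxeterMatrix B} {cs : CoxeterSystem M W} {L : W → ℤ}
variable (H : KLAlg cs L)

/-- The key Kazhdan-Lusztig lemma: if `sw < w` then `T_s C_w = v^{L(s)} C_w`. -/
lemma TsC (hLpos : ∀ w : W, w ≠ 1 → 0 < L w) (s : B) :
    ∀ (n : ℕ) (w : W), cs.length w ≤ n →
      cs.length (cs.simple s * w) < cs.length w →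
      H.T (cs.simple s) * H.C w = (LaurentPolynomial.T (L (cs.simple s)) : LaurentPolynomial ℤ) • H.C w := by
  classical
  intro n
  induction n with
  | zero => intro w hw hd; omega
  | succ n IH =>
    intro w hw hd
    have hLs : 0 < L (cs.simple s) := hLpos _ (simple_ne_one s)
    have hcastL : (0 : WithBot ℤ) < ((L (cs.simple s) : ℤ) : WithBot ℤ) := by exact_mod_cast hLs
    set w' := cs.simple s * w with hw'
    have hlw : cs.length w' + 1 = cs.length w := by
      rcases cs.length_simple_mul w s with h1 | h2
      · rw [← hw'] at h1; omega
      · rw [← hw'] at h2; exact h2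
    have hww : cs.simple s * w' = w := by rw [hw', cs.simple_mul_simple_cancel_left]
    set e : H.carrier := H.T (cs.simple s) * H.C w'
        + (LaurentPolynomial.T (-(L (cs.simple s))) : LaurentPolynomial ℤ) • H.C w' with he
    -- coefficient formula for e
    have he_coeff : ∀ y : W, H.T.repr e y
        = H.T.repr (H.C w') (cs.simple s * y)
          + (if cs.length (cs.simple s * y) < cs.length y then cc cs L s else 0)
            * H.T.repr (H.C w') y
          + (LaurentPolynomial.T (-(L (cs.simple s))) : LaurentPolynomial ℤ) * H.T.repr (H.C w') y := by
      intro y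
      rw [he, map_add, Finsupp.add_apply, reprTs, map_smul, Finsupp.smul_apply, smul_eq_mul]
    -- T_s e = v^L e
    have hTse : H.T (cs.simple s) * e = (LaurentPolynomial.T (L (cs.simple s)) : LaurentPolynomial ℤ) • e := by
      have h1 : H.T (cs.simple s) * e
          = H.C w' + (LaurentPolynomial.T (L (cs.simple s)) : LaurentPolynomial ℤ) • (H.T (cs.simple s) * H.C w') := by
        rw [he, mul_add, ← mul_assoc, Ts_sq, add_mul, one_mul, smul_mul_assoc, mul_smul_comm,
          add_assoc, ← add_smul]
        congr 2
        rw [cc]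
        ring
      have h2 : (LaurentPolynomial.T (L (cs.simple s)) : LaurentPolynomial ℤ) • e
          = H.C w' + (LaurentPolynomial.T (L (cs.simple s)) : LaurentPolynomial ℤ) • (H.T (cs.simple s) * H.C w') := by
        rw [he, smul_add, smul_smul, ← LaurentPolynomial.T_add, add_neg_cancel,
          LaurentPolynomial.T_zero, one_smul]
        exact add_comm _ _
      rw [h1, h2]
    -- bar e = e
    have hbare : H.bar e = e := by
      rw [he, H.bar_add, H.bar_mul, bar_Ts, H.C_bar, H.bar_smul, H.C_bar,
        LaurentPolynomial.invert_T, sub_mul, smul_mul_assoc, one_mul, neg_neg,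
        sub_eq_add_neg, add_assoc, ← neg_smul, ← add_smul]
      congr 2
      rw [cc]
      ring
    set g : H.carrier := e - H.C w with hg
    have hbarg : H.bar g = g := by rw [hg, bar_sub, hbare, H.C_bar]
    have hsym : ∀ y : W, LaurentPolynomial.invert (H.C.repr g y) = H.C.repr g y := by
      intro y
      rw [← repr_C_bar H g y, hbarg]
    have hTrg : ∀ y : W, H.T.repr g y = H.T.repr e y - H.T.repr (H.C w) y := by
      intro y
      rw [hg, map_sub, Finsupp.sub_apply]
    have hK1 : ∀ y : W, H.T.repr g y
        = (H.C.repr g).sum fun x cx => cx * H.T.repr (H.C x) y := by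
      intro y
      conv_lhs => rw [← H.C.linearCombination_repr g]
      rw [Finsupp.linearCombination_apply, map_finsuppSum, Finsupp.sum_apply]
      apply Finsupp.sum_congr
      intro x _
      rw [map_smul, Finsupp.smul_apply, smul_eq_mul]
    have hsplit : ∀ y : W, H.C.repr g y = H.T.repr g y
        - ∑ x ∈ (H.C.repr g).support.erase y, H.C.repr g x * H.T.repr (H.C x) y := by
      intro y
      rw [hK1 y, Finsupp.sum]
      by_cases hysupp : y ∈ (H.C.repr g).support
      · rw [← Finset.add_sum_erase _ _ hysupp, H.C_diag, mul_one]
        ring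
      · rw [Finset.erase_eq_of_notMem hysupp, Finsupp.notMem_support_iff.mp hysupp]
        ring
    -- degree facts
    have hp0 : ∀ (y x : W), (H.T.repr (H.C x) y).degree ≤ ((0 : ℤ) : WithBot ℤ) := by
      intro y x
      by_cases hyx : y = x
      · subst hyx
        rw [H.C_diag, ldeg_one]
        exact_mod_cast le_rfl
      · exact_mod_cast (H.C_off x y hyx).le
    have hCoff' : ∀ (x y : W), y ≠ x →
        (H.T.repr (H.C x) y).degree < ((0 : ℤ) : WithBot ℤ) := by
      intro x y h
      exact_mod_cast H.C_off x y h
    have hdegcc : (cc cs L s).degree ≤ ((L (cs.simple s) : ℤ) : WithBot ℤ) := by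
      rw [cc]
      refine (ldeg_sub_le _ _).trans (max_le (LaurentPolynomial.degree_T_le _)
        ((LaurentPolynomial.degree_T_le _).trans ?_))
      exact_mod_cast (by omega : -(L (cs.simple s)) ≤ L (cs.simple s))
    -- G0 : support of C-coefficients of g lies strictly below w
    have hG0 : ∀ x : W, cs.length w ≤ cs.length x → H.C.repr g x = 0 := by
      intro x hx
      by_contra hbx
      have hxsupp : x ∈ (H.C.repr g).support := Finsupp.mem_support_iff.mpr hbx
      have hne : (((H.C.repr g).support).image cs.length).Nonempty :=
        ⟨_, Finset.mem_image_of_mem _ hxsupp⟩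
      set N := (((H.C.repr g).support).image cs.length).max' hne with hN
      obtain ⟨y₀, hy₀supp, hy₀len⟩ := Finset.mem_image.mp
        ((((H.C.repr g).support).image cs.length).max'_mem hne)
      have hNw : cs.length w ≤ N :=
        le_trans hx (Finset.le_max' _ _ (Finset.mem_image_of_mem _ hxsupp))
      have hsum : H.T.repr g y₀ = H.C.repr g y₀ := by
        rw [hK1 y₀]
        rw [Finsupp.sum_eq_single y₀ ?h0 ?h1]
        · rw [H.C_diag, mul_one]
        · intro x' hx' hxy'
          have hz : H.T.repr (H.C x') y₀ = 0 := by
            by_contra hh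
            rcases C_tri H x' y₀ hh with hlt | heq
            · have hle : cs.length x' ≤ N := Finset.le_max' _ _
                (Finset.mem_image_of_mem _ (Finsupp.mem_support_iff.mpr hx'))
              omega
            · exact hxy' heq.symm
          rw [hz, mul_zero]
        · intro _
          rw [zero_mul]
      have hTg0 : H.T.repr g y₀ = 0 := by
        rw [hTrg y₀, he_coeff y₀]
        by_cases hy₀w : y₀ = w
        · subst hy₀w
          have h1 : H.T.repr (H.C w') (cs.simple s * y₀) = 1 := by
            rw [← hw']
            exact H.C_diag w'
          have h2 : H.T.repr (H.C w') y₀ = 0 := by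
            by_contra hh
            rcases C_tri H w' y₀ hh with hlt | heq
            · omega
            · have := congrArg cs.length heq; omega
          rw [h1, h2, H.C_diag]
          ring
        · have h2 : H.T.repr (H.C w') y₀ = 0 := by
            by_contra hh
            rcases C_tri H w' y₀ hh with hlt | heq
            · omega
            · have := congrArg cs.length heq; omega
          have h1 : H.T.repr (H.C w') (cs.simple s * y₀) = 0 := by
            by_contra hh
            rcases C_tri H w' _ hh with hlt | heq
            · have := cs.length_simple_mul y₀ s
              omega
            · apply hy₀w
              rw [← hww, ← heq, cs.simple_mul_simple_cancel_left]
          have h3 : H.T.repr (H.C w) y₀ = 0 := by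
            by_contra hh
            rcases C_tri H w y₀ hh with hlt | heq
            · omega
            · exact hy₀w heq
          rw [h1, h2, h3]
          ring
      rw [hTg0] at hsum
      exact (Finsupp.mem_support_iff.mp hy₀supp) hsum.symm
    -- degree bound for e coefficients
    have hdeg_e : ∀ y : W, (H.T.repr e y).degree < ((L (cs.simple s) : ℤ) : WithBot ℤ) := by
      intro y
      rw [he_coeff y]
      apply ldeg_add_lt (ldeg_add_lt ?_ ?_) ?_
      · exact lt_of_le_of_lt (hp0 _ _) (by exact_mod_cast hLs)
      · by_cases hcond : cs.length (cs.simple s * y) < cs.length y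
        · rw [if_pos hcond]
          have hyw' : y ≠ w' := by
            intro hh
            rw [hh, hww] at hcond
            omega
          refine lt_of_le_of_lt (ldeg_mul_le _ _) ?_
          have h5 := wb_add_lt_of_le_of_lt hdegcc (hCoff' w' y hyw')
          rw [add_zero] at h5
          exact h5
        · rw [if_neg hcond, zero_mul, LaurentPolynomial.degree_zero]
          exact WithBot.bot_lt_coe _
      · refine lt_of_le_of_lt (ldeg_mul_le _ _) ?_
        refine lt_of_le_of_lt (wb_add_le (LaurentPolynomial.degree_T_le _) (hp0 y w')) ?_
        exact_mod_cast (by omega : -(L (cs.simple s)) + 0 < L (cs.simple s))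
    -- G1 : degree bound for C-coefficients of g
    have hG1 : ∀ (d : ℕ) (y : W), cs.length w ≤ cs.length y + d →
        (H.C.repr g y).degree < ((L (cs.simple s) : ℤ) : WithBot ℤ) := by
      intro d
      induction d with
      | zero =>
        intro y hy
        rw [hG0 y (by omega), LaurentPolynomial.degree_zero]
        exact WithBot.bot_lt_coe _
      | succ d IHd =>
        intro y hy
        by_cases hylw : cs.length w ≤ cs.length y
        · rw [hG0 y hylw, LaurentPolynomial.degree_zero]
          exact WithBot.bot_lt_coe _
        · push_neg at hylw
          rw [hsplit y]
          apply ldeg_sub_lt ?_ ?_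
          · rw [hTrg y]
            exact ldeg_sub_lt (hdeg_e y) (lt_of_le_of_lt (hp0 y w) hcastL)
          · apply ldeg_sum_lt
            intro x hx
            by_cases hbx : H.C.repr g x = 0
            · rw [hbx, zero_mul, LaurentPolynomial.degree_zero]
              exact WithBot.bot_lt_coe _
            by_cases hpx : H.T.repr (H.C x) y = 0
            · rw [hpx, mul_zero, LaurentPolynomial.degree_zero]
              exact WithBot.bot_lt_coe _
            have hxy : x ≠ y := Finset.ne_of_mem_erase hx
            have hylt : cs.length y < cs.length x := by
              rcases C_tri H x y hpx with hlt | heq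
              · exact hlt
              · exact absurd heq.symm hxy
            have hbd := IHd x (by omega)
            refine lt_of_le_of_lt (ldeg_mul_le _ _) ?_
            have h5 := wb_add_lt_of_lt_of_lt hbd (hCoff' x y (fun hh => hxy hh.symm))
            rw [add_zero] at h5
            exact h5
    -- G2 : C-coefficients of g vanish at ascents
    have hG2 : ∀ (d : ℕ) (y : W), cs.length w ≤ cs.length y + d →
        cs.length y < cs.length (cs.simple s * y) → H.C.repr g y = 0 := by
      intro d
      induction d with
      | zero =>
        intro y hy _
        exact hG0 y (by omega)
      | succ d IHd =>
        intro y hy hasc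
        by_cases hylw : cs.length w ≤ cs.length y
        · exact hG0 y hylw
        · push_neg at hylw
          have hyne_w : y ≠ w := by
            intro hh
            rw [hh, ← hw'] at hasc
            omega
          apply symm_neg_zero (hsym y)
          have hdeg : (H.C.repr g y).degree < ((0 : ℤ) : WithBot ℤ) := by
            rw [hsplit y]
            apply ldeg_sub_lt ?_ ?_
            · rw [hTrg y, he_coeff y, if_neg (by omega), zero_mul, add_zero]
              apply ldeg_sub_lt (ldeg_add_lt ?_ ?_) ?_
              · have h6 : cs.simple s * y ≠ w' := by
                  intro hh
                  apply hyne_w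
                  rw [← hww, ← hh, cs.simple_mul_simple_cancel_left]
                exact hCoff' w' _ h6
              · refine lt_of_le_of_lt (ldeg_mul_le _ _) ?_
                refine lt_of_le_of_lt
                  (wb_add_le (LaurentPolynomial.degree_T_le _) (hp0 y w')) ?_
                exact_mod_cast (by omega : -(L (cs.simple s)) + 0 < (0 : ℤ))
              · exact hCoff' w y hyne_w
            · apply ldeg_sum_lt
              intro x hx
              by_cases hbx : H.C.repr g x = 0
              · rw [hbx, zero_mul, LaurentPolynomial.degree_zero]
                exact WithBot.bot_lt_coe _
              by_cases hpx : H.T.repr (H.C x) y = 0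
              · rw [hpx, mul_zero, LaurentPolynomial.degree_zero]
                exact WithBot.bot_lt_coe _
              have hxy : x ≠ y := Finset.ne_of_mem_erase hx
              have hylt : cs.length y < cs.length x := by
                rcases C_tri H x y hpx with hlt | heq
                · exact hlt
                · exact absurd heq.symm hxy
              rcases Nat.lt_or_ge (cs.length (cs.simple s * x)) (cs.length x) with hxdesc | hxasc
              · have hxltw : cs.length x < cs.length w := by
                  by_contra hh
                  push_neg at hh
                  exact hbx (hG0 x hh)
                have hQx := IH x (by omega) hxdesc
                have hrel : (LaurentPolynomial.T (L (cs.simple s)) : LaurentPolynomial ℤ) * H.T.repr (H.C x) y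
                    = H.T.repr (H.C x) (cs.simple s * y) := by
                  have h7 := reprTs H s y (H.C x)
                  rw [hQx, map_smul, Finsupp.smul_apply, smul_eq_mul,
                    if_neg (by omega), zero_mul, add_zero] at h7
                  exact h7
                have hdegp : (H.T.repr (H.C x) y).degree
                    ≤ ((-(L (cs.simple s)) : ℤ) : WithBot ℤ) := by
                  have h8 : ((L (cs.simple s) : ℤ) : WithBot ℤ)
                      + (H.T.repr (H.C x) y).degree
                      = (H.T.repr (H.C x) (cs.simple s * y)).degree := by
                    rw [← ldeg_T_mul, hrel]
                  have h9 := hp0 (cs.simple s * y) x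
                  rw [← h8] at h9
                  cases hdd : (H.T.repr (H.C x) y).degree with
                  | bot => exact bot_le
                  | coe dd =>
                    rw [hdd, ← WithBot.coe_add] at h9
                    have h10 : L (cs.simple s) + dd ≤ (0 : ℤ) := by exact_mod_cast h9
                    exact_mod_cast (by omega : dd ≤ -(L (cs.simple s)))
                have hdegb := hG1 (cs.length w) x (by omega)
                refine lt_of_le_of_lt (ldeg_mul_le _ _) ?_
                have h9 := wb_add_lt_of_lt_of_le hdegb hdegp
                rw [add_neg_cancel] at h9
                exact h9
              · have hax : cs.length x < cs.length (cs.simple s * x) := by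
                  have := cs.length_simple_mul_ne x s
                  omega
                exact absurd (IHd x (by omega) hax) hbx
          exact_mod_cast hdeg
    -- all C-components of g are v^L-eigenvectors
    have hfin : ∀ x ∈ (H.C.repr g).support, H.T (cs.simple s) * H.C x
        = (LaurentPolynomial.T (L (cs.simple s)) : LaurentPolynomial ℤ) • H.C x := by
      intro x hxs
      have hbx := Finsupp.mem_support_iff.mp hxs
      have hxltw : cs.length x < cs.length w := by
        by_contra hh
        push_neg at hh
        exact hbx (hG0 x hh)
      have hxdesc : cs.length (cs.simple s * x) < cs.length x := by
        by_contra hh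
        push_neg at hh
        have hne2 := cs.length_simple_mul_ne x s
        exact hbx (hG2 (cs.length w) x (by omega) (by omega))
      exact IH x (by omega) hxdesc
    have hTg : H.T (cs.simple s) * g = (LaurentPolynomial.T (L (cs.simple s)) : LaurentPolynomial ℤ) • g := by
      conv_lhs => rw [← H.C.linearCombination_repr g]
      conv_rhs => rw [← H.C.linearCombination_repr g]
      rw [Finsupp.linearCombination_apply, Finsupp.sum, Finset.mul_sum, Finset.smul_sum]
      apply Finset.sum_congr rfl
      intro x hxs
      rw [mul_smul_comm, hfin x hxs, smul_smul, smul_smul, mul_comm]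
    have hCw : H.C w = e - g := by
      rw [hg]
      exact (sub_sub_cancel _ _).symm
    rw [hCw, mul_sub, hTse, hTg, ← smul_sub]

end KLKey
end KLAux
namespace KLAux
open LaurentPolynomial

section Final
variable {B W : Type*} [Group W] {M : CoxeterMatrix B} {cs : CoxeterSystem M W} {L : W → ℤ}
variable (H : KLAlg cs L)

lemma T_mul_simple_right : ∀ (n : ℕ) (u : W), cs.length u ≤ n → ∀ s : B,
    cs.length (u * cs.simple s) = cs.length u + 1 →
    H.T u * H.T (cs.simple s) = H.T (u * cs.simple s) := by
  intro n
  induction n with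
  | zero =>
    intro u hu s _
    have h1 : u = 1 := cs.length_eq_zero_iff.mp (by omega)
    subst h1
    rw [H.T_one, one_mul, one_mul]
  | succ n IH =>
    intro u hu s hus
    by_cases hu1 : u = 1
    · subst hu1
      rw [H.T_one, one_mul, one_mul]
    · obtain ⟨i, hdesc⟩ := cs.exists_leftDescent_of_ne_one hu1
      have hdesc' : cs.length (cs.simple i * u) < cs.length u := hdesc
      set u' := cs.simple i * u with hu'
      have hlu : cs.length u' + 1 = cs.length u := by
        rcases cs.length_simple_mul u i with h1 | h2
        · rw [← hu'] at h1; omega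
        · rw [← hu'] at h2; exact h2
      have huu : cs.simple i * u' = u := by rw [hu', cs.simple_mul_simple_cancel_left]
      have hTu : H.T u = H.T (cs.simple i) * H.T u' := by
        rw [H.T_mul_of_lt i u' (by rw [huu]; omega), huu]
      have h3 : cs.length (u' * cs.simple s) = cs.length u' + 1 := by
        rcases cs.length_mul_simple u' s with h4 | h4
        · exact h4
        · exfalso
          have h6 : cs.simple i * (u' * cs.simple s) = u * cs.simple s := by
            rw [← mul_assoc, huu]
          have h5 : cs.length (u * cs.simple s) ≤ cs.length (u' * cs.simple s) + 1 := by
            rcases cs.length_simple_mul (u' * cs.simple s) i with h7 | h7 <;>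
              rw [h6] at h7 <;> omega
          omega
      rw [hTu, mul_assoc, IH u' (by omega) s h3, H.T_mul_of_lt i (u' * cs.simple s)
        (by rw [← mul_assoc, huu]; omega), ← mul_assoc, huu]

end Final
end KLAux

/-- For `v = w_J z` with `ℓ(w_J z) = ℓ(w_J) + ℓ(z)`, the `A`-submodule
`M = ⟨T_x C_v : x ∈ X_J⟩` of the Hecke algebra is a left ideal. -/
theorem span_T_C_is_left_ideal {B W : Type*} [Group W] {M : CoxeterMatrix B}
    (cs : CoxeterSystem M W) (L : W → ℤ)
    (hL : ∀ x y : W, cs.length (x * y) = cs.length x + cs.length y → L (x * y) = L x + L y)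
    (hLpos : ∀ w : W, w ≠ 1 → 0 < L w)
    (H : KLAlg cs L) (J : Set B)
    (hfin : (Subgroup.closure (cs.simple '' J) : Set W).Finite)
    (wJ : W) (hwJ : wJ ∈ Subgroup.closure (cs.simple '' J))
    (hlong : ∀ u ∈ Subgroup.closure (cs.simple '' J), cs.length u ≤ cs.length wJ)
    (z : W) (hz : cs.length (wJ * z) = cs.length wJ + cs.length z) :
    ∀ h m : H.carrier,
      m ∈ Submodule.span (LaurentPolynomial ℤ)
        ((fun x => H.T x * H.C (wJ * z)) ''
          {w : W | ∀ s ∈ J, cs.length w < cs.length (w * cs.simple s)}) →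
      h * m ∈ Submodule.span (LaurentPolynomial ℤ)
        ((fun x => H.T x * H.C (wJ * z)) ''
          {w : W | ∀ s ∈ J, cs.length w < cs.length (w * cs.simple s)}) := by
  classical
  open KLAux in
  intro h m hm
  set v := wJ * z with hv
  set Mspan := Submodule.span (LaurentPolynomial ℤ)
      ((fun x => H.T x * H.C v) ''
        {w : W | ∀ s ∈ J, cs.length w < cs.length (w * cs.simple s)}) with hMspan
  -- descent of v at simple reflections from J
  have hvdesc : ∀ s' ∈ J, cs.length (cs.simple s' * v) + 1 = cs.length v := by
    intro s' hs'
    have h1 : cs.simple s' * wJ ∈ Subgroup.closure (cs.simple '' J) :=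
      mul_mem (Subgroup.subset_closure (Set.mem_image_of_mem _ hs')) hwJ
    have h2 : cs.length (cs.simple s' * wJ) ≤ cs.length wJ := hlong _ h1
    have h3 : cs.length (cs.simple s' * wJ) + 1 = cs.length wJ := by
      rcases cs.length_simple_mul wJ s' with h4 | h4
      · omega
      · exact h4
    have h5 : cs.length (cs.simple s' * v) ≤ cs.length (cs.simple s' * wJ) + cs.length z := by
      have h7 := cs.length_mul_le (cs.simple s' * wJ) z
      rw [mul_assoc, ← hv] at h7
      exact h7
    rcases cs.length_simple_mul v s' with h6 | h6
    · omega
    · exact h6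
  -- every T_u * C_v belongs to the span
  have hTwC : ∀ (n : ℕ) (u : W), cs.length u ≤ n → H.T u * H.C v ∈ Mspan := by
    intro n
    induction n with
    | zero =>
      intro u hu
      have h1 : u = 1 := cs.length_eq_zero_iff.mp (by omega)
      subst h1
      apply Submodule.subset_span
      refine ⟨1, ?_, rfl⟩
      intro s hs
      rw [one_mul]
      have h2 := cs.length_simple s
      have h3 := cs.length_one
      omega
    | succ n IH =>
      intro u hu
      by_cases hX : ∀ s' ∈ J, cs.length u < cs.length (u * cs.simple s')
      · exact Submodule.subset_span ⟨u, hX, rfl⟩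
      · push_neg at hX
        obtain ⟨s', hs', hle⟩ := hX
        have hne := cs.length_mul_simple_ne u s'
        have hdesc : cs.length (u * cs.simple s') + 1 = cs.length u := by
          rcases cs.length_mul_simple u s' with h1 | h1
          · omega
          · exact h1
        set u' := u * cs.simple s' with hu'
        have huu : u' * cs.simple s' = u := by rw [hu', cs.simple_mul_simple_cancel_right]
        have hTu : H.T u = H.T u' * H.T (cs.simple s') := by
          rw [T_mul_simple_right H (cs.length u') u' le_rfl s' (by rw [huu]; omega), huu]
        have hCs : H.T (cs.simple s') * H.C v
            = (LaurentPolynomial.T (L (cs.simple s')) : LaurentPolynomial ℤ) • H.C v := by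
          apply TsC H hLpos s' (cs.length v) v le_rfl
          have h8 := hvdesc s' hs'
          omega
        rw [hTu, mul_assoc, hCs, mul_smul_comm]
        exact Submodule.smul_mem _ _ (IH u' (by omega))
  -- multiplication by T_s preserves the span
  have hTs : ∀ (s : B), ∀ x ∈ Mspan, H.T (cs.simple s) * x ∈ Mspan := by
    intro s x hx
    induction hx using Submodule.span_induction with
    | mem y hy =>
      obtain ⟨u, hu, rfl⟩ := hy
      show H.T (cs.simple s) * (H.T u * H.C v) ∈ Mspan
      rw [← mul_assoc]
      rcases cs.length_simple_mul u s with h1 | h1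
      · rw [H.T_mul_of_lt s u h1]
        exact hTwC (cs.length (cs.simple s * u)) _ le_rfl
      · rw [H.T_mul_of_gt s u h1, add_mul, smul_mul_assoc]
        exact Submodule.add_mem _ (hTwC (cs.length (cs.simple s * u)) _ le_rfl)
          (Submodule.smul_mem _ _ (hTwC (cs.length u) u le_rfl))
    | zero =>
      rw [mul_zero]
      exact Submodule.zero_mem _
    | add y z' _ _ hy hz' =>
      rw [mul_add]
      exact Submodule.add_mem _ hy hz'
    | smul c y _ hy =>
      rw [mul_smul_comm]
      exact Submodule.smul_mem _ _ hy
  -- multiplication by any T_u preserves the span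
  have hTw : ∀ (n : ℕ) (u : W), cs.length u ≤ n → ∀ x ∈ Mspan, H.T u * x ∈ Mspan := by
    intro n
    induction n with
    | zero =>
      intro u hu x hx
      have h1 : u = 1 := cs.length_eq_zero_iff.mp (by omega)
      subst h1
      rw [H.T_one, one_mul]
      exact hx
    | succ n IH =>
      intro u hu x hx
      by_cases hu1 : u = 1
      · subst hu1
        rw [H.T_one, one_mul]
        exact hx
      · obtain ⟨i, hdesc⟩ := cs.exists_leftDescent_of_ne_one hu1
        have hdesc' : cs.length (cs.simple i * u) < cs.length u := hdesc
        set u' := cs.simple i * u with hu'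
        have hlu : cs.length u' + 1 = cs.length u := by
          rcases cs.length_simple_mul u i with h1 | h2
          · rw [← hu'] at h1; omega
          · rw [← hu'] at h2; exact h2
        have huu : cs.simple i * u' = u := by rw [hu', cs.simple_mul_simple_cancel_left]
        have hTu : H.T u = H.T (cs.simple i) * H.T u' := by
          rw [H.T_mul_of_lt i u' (by rw [huu]; omega), huu]
        rw [hTu, mul_assoc]
        exact hTs i _ (IH u' (by omega) x hx)
  -- expand h in the T basis
  have hexp : h * m = (H.T.repr h).sum fun u c => c • (H.T u * m) := by
    conv_lhs => rw [← H.T.linearCombination_repr h]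
    rw [Finsupp.linearCombination_apply, Finsupp.sum, Finsupp.sum, Finset.sum_mul]
    apply Finset.sum_congr rfl
    intro u _
    rw [smul_mul_assoc]
  rw [hexp, Finsupp.sum]
  apply Submodule.sum_mem
  intro u _
  exact Submodule.smul_mem _ _ (hTw (cs.length u) u le_rfl m hm)
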